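/- Let G = (V,E) be a finite directed graph and k ≥ 1. Then G has an out-branching with at least k internal nodes if and only if there exists a node r ∈ V such that G has an out-branching rooted at r and G has an out-tree rooted at r with exactly k internal nodes and at most k leaves. -/

import Mathlib

variable {V : Type*}

/-- The node set of a rooted set `A` of directed edges with root `r`: the root together
with all endpoints of edges of `A`. -/
def otNodes [DecidableEq V] (A : Finset (V × V)) (r : V) : Finset V :=
  insert r (A.image Prod.fst ∪ A.image Prod.snd)

/-- `A` is the edge set of an out-tree rooted at `r`: edges join distinct nodes, the root
has in-degree `0`, every other node has in-degree exactly `1`, and every node is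
reachable from the root along directed edges.  (This is equivalent to: the underlying
undirected graph is a tree and `r` is the unique node of in-degree `0`.) -/
structure IsOutTree [DecidableEq V] (A : Finset (V × V)) (r : V) : Prop where
  ne : ∀ e ∈ A, e.1 ≠ e.2
  root_no_in : ∀ e ∈ A, e.2 ≠ r
  in_unique : ∀ v ∈ otNodes A r, v ≠ r → (A.filter fun e => e.2 = v).card = 1
  reach : ∀ v ∈ otNodes A r, Relation.ReflTransGen (fun a b => (a, b) ∈ A) r v

/-- The number of internal nodes (nodes of out-degree at least `1`) of the out-tree with
edge set `A` and root `r`. -/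
def internalCount [DecidableEq V] (A : Finset (V × V)) (r : V) : ℕ :=
  ((otNodes A r).filter fun v => (A.filter fun e => e.1 = v).Nonempty).card

/-- The number of leaves (nodes of out-degree `0`) of the out-tree with edge set `A`
and root `r`. -/
def leafCount [DecidableEq V] (A : Finset (V × V)) (r : V) : ℕ :=
  ((otNodes A r).filter fun v => A.filter (fun e => e.1 = v) = ∅).card

/-- `A` is (the edge set of) an out-tree of the digraph `G` rooted at `r`. -/
def IsOutTreeOf [DecidableEq V] (G : V → V → Prop) (A : Finset (V × V)) (r : V) : Prop :=
  (∀ e ∈ A, G e.1 e.2) ∧ IsOutTree A r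

/-- `A` is (the edge set of) an out-branching of `G` rooted at `r`: an out-tree of `G`
rooted at `r` whose node set is all of `V`. -/
def IsOutBranchingOf [DecidableEq V] [Fintype V] (G : V → V → Prop) (A : Finset (V × V))
    (r : V) : Prop :=
  IsOutTreeOf G A r ∧ otNodes A r = Finset.univ

/-- The two nodes of a directed edge. -/
def pairNodes [DecidableEq V] (e : V × V) : Finset V := {e.1, e.2}

/-- `P` is a collection of pairwise node-disjoint directed paths on two nodes in `G`
(each such path being a directed edge of `G` with distinct endpoints). -/
def IsDisjointTwoPaths [DecidableEq V] (G : V → V → Prop) (P : Finset (V × V)) : Prop :=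
  (∀ e ∈ P, G e.1 e.2 ∧ e.1 ≠ e.2) ∧
  ∀ e ∈ P, ∀ e' ∈ P, e ≠ e' → Disjoint (pairNodes e) (pairNodes e')

section Aux
variable [DecidableEq V] {A B : Finset (V × V)} {r : V} {e : V × V} {v : V}

lemma mem_otNodes : v ∈ otNodes A r ↔ v = r ∨ (∃ e ∈ A, e.1 = v) ∨ (∃ e ∈ A, e.2 = v) := by
  simp [otNodes]

lemma root_mem_otNodes : r ∈ otNodes A r := Finset.mem_insert_self _ _

lemma tail_mem_otNodes (he : e ∈ A) : e.1 ∈ otNodes A r :=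
  mem_otNodes.mpr (Or.inr (Or.inl ⟨e, he, rfl⟩))

lemma head_mem_otNodes (he : e ∈ A) : e.2 ∈ otNodes A r :=
  mem_otNodes.mpr (Or.inr (Or.inr ⟨e, he, rfl⟩))

lemma otNodes_mono (h : A ⊆ B) : otNodes A r ⊆ otNodes B r := by
  intro v hv
  rcases mem_otNodes.mp hv with h1 | ⟨e, he, h1⟩ | ⟨e, he, h1⟩
  · exact h1 ▸ root_mem_otNodes
  · exact h1 ▸ tail_mem_otNodes (h he)
  · exact h1 ▸ head_mem_otNodes (h he)

lemma in_edge (h : IsOutTree A r) (hv : v ∈ otNodes A r) (hvr : v ≠ r) :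
    ∃ e ∈ A, e.2 = v ∧ ∀ f ∈ A, f.2 = v → f = e := by
  obtain ⟨e, he⟩ := Finset.card_eq_one.mp (h.in_unique v hv hvr)
  have he' : e ∈ A ∧ e.2 = v := by
    have := Finset.mem_filter.mp (he ▸ Finset.mem_singleton_self e)
    exact this
  refine ⟨e, he'.1, he'.2, fun f hf hf2 => ?_⟩
  have : f ∈ ({e} : Finset (V × V)) := he ▸ Finset.mem_filter.mpr ⟨hf, hf2⟩
  exact Finset.mem_singleton.mp this

lemma root_out (h : IsOutTree A r) (hA : A.Nonempty) : ∃ e ∈ A, e.1 = r := by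
  obtain ⟨f, hf⟩ := hA
  have hr := h.reach f.2 (head_mem_otNodes hf)
  rcases Relation.ReflTransGen.cases_head hr with h1 | ⟨c, hc, _⟩
  · exact absurd h1.symm (h.root_no_in f hf)
  · exact ⟨(r, c), hc, rfl⟩

end Aux

section Count
variable [DecidableEq V] {A : Finset (V × V)} {r : V} {e : V × V} {v : V}

lemma card_otNodes (h : IsOutTree A r) : (otNodes A r).card = A.card + 1 := by
  have h1 : A.card = ∑ v ∈ otNodes A r, (A.filter fun e => e.2 = v).card :=
    Finset.card_eq_sum_card_fiberwise (fun e he => head_mem_otNodes he)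
  have h2 : ∑ v ∈ (otNodes A r).erase r, (A.filter fun e => e.2 = v).card
      + (A.filter fun e => e.2 = r).card = ∑ v ∈ otNodes A r, (A.filter fun e => e.2 = v).card :=
    Finset.sum_erase_add _ _ root_mem_otNodes
  have h3 : (A.filter fun e => e.2 = r) = ∅ :=
    Finset.filter_eq_empty_iff.mpr (fun {e} he => h.root_no_in e he)
  have h4 : ∑ v ∈ (otNodes A r).erase r, (A.filter fun e => e.2 = v).card
      = ((otNodes A r).erase r).card := by
    rw [Finset.card_eq_sum_ones]
    refine Finset.sum_congr rfl (fun v hv => ?_)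
    exact h.in_unique v (Finset.mem_of_mem_erase hv) (Finset.ne_of_mem_erase hv)
  have h5 : ((otNodes A r).erase r).card = (otNodes A r).card - 1 :=
    Finset.card_erase_of_mem root_mem_otNodes
  have h6 : 1 ≤ (otNodes A r).card := Finset.card_pos.mpr ⟨r, root_mem_otNodes⟩
  have h7 : (A.filter fun e => e.2 = r).card = 0 := by rw [h3]; rfl
  omega

lemma internal_add_leaf : internalCount A r + leafCount A r = (otNodes A r).card := by
  unfold internalCount leafCount
  rw [show ((otNodes A r).filter fun v => A.filter (fun e => e.1 = v) = ∅)
      = ((otNodes A r).filter fun v => ¬ (A.filter fun e => e.1 = v).Nonempty) from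
    Finset.filter_congr (fun v _ => by simp [Finset.not_nonempty_iff_eq_empty])]
  exact Finset.card_filter_add_card_filter_not _

lemma exists_leaf (h : IsOutTree A r) :
    ∃ v ∈ otNodes A r, A.filter (fun e => e.1 = v) = ∅ := by
  by_contra hc
  push_neg at hc
  have hall : ∀ v ∈ otNodes A r, 1 ≤ (A.filter fun e => e.1 = v).card := by
    intro v hv
    exact Finset.card_pos.mpr (hc v hv)
  have h1 : A.card = ∑ v ∈ otNodes A r, (A.filter fun e => e.1 = v).card :=
    Finset.card_eq_sum_card_fiberwise (fun e he => tail_mem_otNodes he)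
  have h2 : (otNodes A r).card ≤ ∑ v ∈ otNodes A r, (A.filter fun e => e.1 = v).card := by
    rw [Finset.card_eq_sum_ones]
    exact Finset.sum_le_sum hall
  have := card_otNodes h
  omega

end Count

section Erase
variable [DecidableEq V] {A : Finset (V × V)} {r : V} {e : V × V} {v : V}
variable (h : IsOutTree A r) (hv : v ∈ otNodes A r) (hvr : v ≠ r)
variable (hleaf : A.filter (fun e => e.1 = v) = ∅) (he : e ∈ A) (he2 : e.2 = v)

include h hv hvr hleaf he he2

lemma no_out (f : V × V) (hf : f ∈ A) : f.1 ≠ v := by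
  intro hf1
  have hmem : f ∈ A.filter (fun e => e.1 = v) := Finset.mem_filter.mpr ⟨hf, hf1⟩
  rw [hleaf] at hmem
  exact absurd hmem (Finset.notMem_empty f)

omit hleaf in
lemma in_edge_unique (f : V × V) (hf : f ∈ A) (hf2 : f.2 = v) : f = e := by
  have h1 := h.in_unique v hv hvr
  have := Finset.card_le_one.mp (le_of_eq h1)
  exact this f (Finset.mem_filter.mpr ⟨hf, hf2⟩) e (Finset.mem_filter.mpr ⟨he, he2⟩)

lemma otNodes_erase : otNodes (A.erase e) r = (otNodes A r).erase v := by
  ext w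
  simp only [Finset.mem_erase, mem_otNodes]
  constructor
  · rintro (rfl | ⟨f, ⟨hfe, hf⟩, rfl⟩ | ⟨f, ⟨hfe, hf⟩, rfl⟩)
    · exact ⟨Ne.symm hvr, Or.inl rfl⟩
    · exact ⟨no_out h hv hvr hleaf he he2 f hf, Or.inr (Or.inl ⟨f, hf, rfl⟩)⟩
    · refine ⟨fun hfv => hfe ?_, Or.inr (Or.inr ⟨f, hf, rfl⟩)⟩
      exact in_edge_unique h hv hvr he he2 f hf hfv
  · rintro ⟨hwv, rfl | ⟨f, hf, rfl⟩ | ⟨f, hf, rfl⟩⟩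
    · exact Or.inl rfl
    · by_cases hfe : f = e
      · subst hfe
        by_cases hr : f.1 = r
        · exact Or.inl hr
        · obtain ⟨g, hg, hg2, _⟩ := in_edge h (tail_mem_otNodes hf) hr
          have hge : g ≠ f := by
            intro hgf
            exact h.ne f hf (by rw [← hg2, hgf])
          exact Or.inr (Or.inr ⟨g, ⟨hge, hg⟩, hg2⟩)
      · exact Or.inr (Or.inl ⟨f, ⟨hfe, hf⟩, rfl⟩)
    · have hfe : f ≠ e := fun hfe => hwv (by rw [hfe, he2])
      exact Or.inr (Or.inr ⟨f, ⟨hfe, hf⟩, rfl⟩)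

lemma isOutTree_erase : IsOutTree (A.erase e) r := by
  constructor
  · exact fun f hf => h.ne f (Finset.mem_of_mem_erase hf)
  · exact fun f hf => h.root_no_in f (Finset.mem_of_mem_erase hf)
  · intro w hw hwr
    rw [otNodes_erase h hv hvr hleaf he he2, Finset.mem_erase] at hw
    have hfil : (A.erase e).filter (fun f => f.2 = w) = A.filter (fun f => f.2 = w) := by
      ext f
      simp only [Finset.mem_filter, Finset.mem_erase]
      constructor
      · rintro ⟨⟨_, hf⟩, hf2⟩; exact ⟨hf, hf2⟩
      · rintro ⟨hf, hf2⟩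
        refine ⟨⟨fun hfe => hw.1 ?_, hf⟩, hf2⟩
        rw [← hf2, hfe, he2]
      
    rw [hfil]
    exact h.in_unique w hw.2 hwr
  · have key : ∀ w, Relation.ReflTransGen (fun a b => (a, b) ∈ A) r w → w ≠ v →
        Relation.ReflTransGen (fun a b => (a, b) ∈ A.erase e) r w := by
      intro w hw
      induction hw with
      | refl => exact fun _ => Relation.ReflTransGen.refl
      | @tail b c hrb hbc ih =>
        intro hcv
        have hbv : b ≠ v := no_out h hv hvr hleaf he he2 (b, c) hbc
        refine (ih hbv).tail (Finset.mem_erase.mpr ⟨fun hbe => hcv ?_, hbc⟩)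
        rw [show c = (b, c).2 from rfl, hbe, he2]
    intro w hw
    rw [otNodes_erase h hv hvr hleaf he he2, Finset.mem_erase] at hw
    exact key w (h.reach w hw.2) hw.1

lemma internal_erase_lower : internalCount A r ≤ internalCount (A.erase e) r + 1 := by
  have hsub : ((otNodes A r).filter fun w => (A.filter fun f => f.1 = w).Nonempty).erase e.1
      ⊆ (otNodes (A.erase e) r).filter fun w => ((A.erase e).filter fun f => f.1 = w).Nonempty := by
    intro w hw
    obtain ⟨hwe, hw⟩ := Finset.mem_erase.mp hw
    obtain ⟨hwN, f, hf⟩ := Finset.mem_filter.mp hw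
    obtain ⟨hfA, hf1⟩ := Finset.mem_filter.mp hf
    have hwv : w ≠ v := fun hwv => by
      rw [hwv] at hf1
      exact no_out h hv hvr hleaf he he2 f hfA hf1
    refine Finset.mem_filter.mpr ⟨?_, f, Finset.mem_filter.mpr
      ⟨Finset.mem_erase.mpr ⟨fun hfe => hwe (by rw [← hf1, hfe]), hfA⟩, hf1⟩⟩
    rw [otNodes_erase h hv hvr hleaf he he2]
    exact Finset.mem_erase.mpr ⟨hwv, hwN⟩
  have h1 := Finset.card_le_card hsub
  have h2 := Finset.pred_card_le_card_erase
    (s := (otNodes A r).filter fun w => (A.filter fun f => f.1 = w).Nonempty) (a := e.1)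
  unfold internalCount
  omega

lemma internal_erase_sibling (f' : V × V) (hf' : f' ∈ A) (hfe : f' ≠ e) (hf1 : f'.1 = e.1) :
    internalCount A r ≤ internalCount (A.erase e) r := by
  have hsub : ((otNodes A r).filter fun w => (A.filter fun f => f.1 = w).Nonempty)
      ⊆ (otNodes (A.erase e) r).filter fun w => ((A.erase e).filter fun f => f.1 = w).Nonempty := by
    intro w hw
    obtain ⟨hwN, f, hf⟩ := Finset.mem_filter.mp hw
    obtain ⟨hfA, hfw⟩ := Finset.mem_filter.mp hf
    have hwv : w ≠ v := fun hwv => by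
      rw [hwv] at hfw
      exact no_out h hv hvr hleaf he he2 f hfA hfw
    have hmem : w ∈ otNodes (A.erase e) r := by
      rw [otNodes_erase h hv hvr hleaf he he2]
      exact Finset.mem_erase.mpr ⟨hwv, hwN⟩
    by_cases hfee : f = e
    · refine Finset.mem_filter.mpr ⟨hmem, f', Finset.mem_filter.mpr
        ⟨Finset.mem_erase.mpr ⟨hfe, hf'⟩, ?_⟩⟩
      rw [hf1, ← hfee, hfw]
    · exact Finset.mem_filter.mpr ⟨hmem, f, Finset.mem_filter.mpr
        ⟨Finset.mem_erase.mpr ⟨hfee, hfA⟩, hfw⟩⟩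
  exact Finset.card_le_card hsub

end Erase

section Prune
variable [DecidableEq V]

lemma nonempty_of_internal {A : Finset (V × V)} {r : V} (h1 : 1 ≤ internalCount A r) :
    A.Nonempty := by
  have : ((otNodes A r).filter fun v => (A.filter fun e => e.1 = v).Nonempty).Nonempty :=
    Finset.card_pos.mp h1
  obtain ⟨w, hw⟩ := this
  obtain ⟨f, hf⟩ := (Finset.mem_filter.mp hw).2
  exact ⟨f, (Finset.mem_filter.mp hf).1⟩

lemma leaf_ne_root {A : Finset (V × V)} {r v : V} (h : IsOutTree A r) (hA : A.Nonempty)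
    (hleaf : A.filter (fun e => e.1 = v) = ∅) : v ≠ r := by
  rintro rfl
  obtain ⟨e0, he0, he01⟩ := root_out h hA
  have : e0 ∈ A.filter (fun e => e.1 = v) := Finset.mem_filter.mpr ⟨he0, he01⟩
  rw [hleaf] at this
  exact absurd this (Finset.notMem_empty e0)

lemma prune (G : V → V → Prop) (k : ℕ) (hk : 1 ≤ k) :
    ∀ n (A : Finset (V × V)) (r : V), A.card = n → IsOutTree A r →
      (∀ e ∈ A, G e.1 e.2) → k ≤ internalCount A r →
      ∃ T : Finset (V × V), (∀ e ∈ T, G e.1 e.2) ∧ IsOutTree T r ∧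
        internalCount T r = k ∧ leafCount T r ≤ k := by
  intro n
  induction n using Nat.strong_induction_on with
  | _ n ih =>
    intro A r hcard h hG hint
    by_cases hdone : internalCount A r = k ∧ leafCount A r ≤ k
    · exact ⟨A, hG, h, hdone.1, hdone.2⟩
    · have hA : A.Nonempty := nonempty_of_internal (le_trans hk hint)
      have hApos : 0 < A.card := Finset.card_pos.mpr hA
      obtain ⟨v, hv, hleaf⟩ := exists_leaf h
      have hvr : v ≠ r := leaf_ne_root h hA hleaf
      rcases lt_or_eq_of_le hint with hgt | heq
      · -- more than k internal nodes: remove any leaf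
        obtain ⟨e, he, he2, _⟩ := in_edge h hv hvr
        have hlow := internal_erase_lower h hv hvr hleaf he he2
        exact ih (A.card - 1) (by omega) (A.erase e) r
          (by rw [Finset.card_erase_of_mem he])
          (isOutTree_erase h hv hvr hleaf he he2)
          (fun f hf => hG f (Finset.mem_of_mem_erase hf))
          (by omega)
      · -- exactly k internal nodes but too many leaves: pigeonhole on parents
        classical
        have hleafgt : k < leafCount A r := by
          rcases Nat.lt_or_ge k (leafCount A r) with h1 | h1
          · exact h1
          · exact absurd ⟨heq.symm, h1⟩ hdone
        set p : V → V := fun w =>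
          if hw : ∃ f, f ∈ A ∧ f.2 = w then hw.choose.1 else r with hp
        have hmaps : ∀ w ∈ (otNodes A r).filter (fun w => A.filter (fun e => e.1 = w) = ∅),
            p w ∈ (otNodes A r).filter fun w => (A.filter fun e => e.1 = w).Nonempty := by
          intro w hw
          obtain ⟨hwN, hwleaf⟩ := Finset.mem_filter.mp hw
          have hwr : w ≠ r := leaf_ne_root h hA hwleaf
          obtain ⟨ew, hew, hew2, _⟩ := in_edge h hwN hwr
          have hex : ∃ f, f ∈ A ∧ f.2 = w := ⟨ew, hew, hew2⟩
          have hspec := hex.choose_spec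
          have : p w = hex.choose.1 := by rw [hp]; simp [hex]
          rw [this]
          exact Finset.mem_filter.mpr ⟨tail_mem_otNodes hspec.1,
            hex.choose, Finset.mem_filter.mpr ⟨hspec.1, rfl⟩⟩
        have hcardlt : ((otNodes A r).filter fun w => (A.filter fun e => e.1 = w).Nonempty).card
            < ((otNodes A r).filter (fun w => A.filter (fun e => e.1 = w) = ∅)).card := by
          change internalCount A r < leafCount A r
          omega
        obtain ⟨x, hx, y, hy, hxy, hpxy⟩ :=
          Finset.exists_ne_map_eq_of_card_lt_of_maps_to hcardlt hmaps
        obtain ⟨hxN, hxleaf⟩ := Finset.mem_filter.mp hx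
        obtain ⟨hyN, hyleaf⟩ := Finset.mem_filter.mp hy
        have hxr : x ≠ r := leaf_ne_root h hA hxleaf
        have hyr : y ≠ r := leaf_ne_root h hA hyleaf
        obtain ⟨ex, hex, hex2, hexu⟩ := in_edge h hxN hxr
        obtain ⟨ey, hey, hey2, heyu⟩ := in_edge h hyN hyr
        have hexx : ∃ f, f ∈ A ∧ f.2 = x := ⟨ex, hex, hex2⟩
        have heyy : ∃ f, f ∈ A ∧ f.2 = y := ⟨ey, hey, hey2⟩
        have hpx : p x = ex.1 := by
          have hspec := hexx.choose_spec
          have h1 : hexx.choose = ex := hexu _ hspec.1 hspec.2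
          rw [hp]; simp only [hexx, dif_pos]; rw [h1]
        have hpy : p y = ey.1 := by
          have hspec := heyy.choose_spec
          have h1 : heyy.choose = ey := heyu _ hspec.1 hspec.2
          rw [hp]; simp only [heyy, dif_pos]; rw [h1]
        have hexey : ey ≠ ex := by
          intro hh
          exact hxy (by rw [← hex2, ← hey2, hh])
        have htails : ey.1 = ex.1 := by rw [← hpx, ← hpy, hpxy]
        have hpres := internal_erase_sibling h hxN hxr hxleaf hex hex2 ey hey hexey htails
        exact ih (A.card - 1) (by omega) (A.erase ex) r
          (by rw [Finset.card_erase_of_mem hex])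
          (isOutTree_erase h hxN hxr hxleaf hex hex2)
          (fun f hf => hG f (Finset.mem_of_mem_erase hf))
          (le_trans hint hpres)

end Prune

section Extend
variable [DecidableEq V] [Fintype V] {G : V → V → Prop} {B T : Finset (V × V)} {r : V}

lemma extend_tree (hBT : IsOutTree B r) (hBuniv : otNodes B r = Finset.univ)
    (hTT : IsOutTree T r) :
    IsOutTree (T ∪ B.filter fun e => e.2 ∉ otNodes T r) r ∧
      otNodes (T ∪ B.filter fun e => e.2 ∉ otNodes T r) r = Finset.univ := by
  classical
  set A := T ∪ B.filter fun e => e.2 ∉ otNodes T r with hA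
  have hmem : ∀ f : V × V, f ∈ A ↔ f ∈ T ∨ (f ∈ B ∧ f.2 ∉ otNodes T r) := by
    intro f
    simp [hA, Finset.mem_union, Finset.mem_filter]
  have hTsub : T ⊆ A := Finset.subset_union_left
  have hne : ∀ f ∈ A, f.1 ≠ f.2 := by
    intro f hf
    rcases (hmem f).mp hf with hf | ⟨hf, _⟩
    · exact hTT.ne f hf
    · exact hBT.ne f hf
  have hroot : ∀ f ∈ A, f.2 ≠ r := by
    intro f hf
    rcases (hmem f).mp hf with hf | ⟨_, hf2⟩
    · exact hTT.root_no_in f hf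
    · exact fun hr => hf2 (hr ▸ root_mem_otNodes)
  have hinu : ∀ v ∈ otNodes A r, v ≠ r → (A.filter fun e => e.2 = v).card = 1 := by
    intro v _ hvr
    by_cases hvT : v ∈ otNodes T r
    · have : (A.filter fun e => e.2 = v) = T.filter fun e => e.2 = v := by
        ext f
        simp only [Finset.mem_filter, hmem]
        constructor
        · rintro ⟨hf | ⟨_, hf2⟩, hfv⟩
          · exact ⟨hf, hfv⟩
          · exact absurd (hfv ▸ hvT) hf2
        · rintro ⟨hf, hfv⟩
          exact ⟨Or.inl hf, hfv⟩
      rw [this]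
      exact hTT.in_unique v hvT hvr
    · have : (A.filter fun e => e.2 = v) = B.filter fun e => e.2 = v := by
        ext f
        simp only [Finset.mem_filter, hmem]
        constructor
        · rintro ⟨hf | ⟨hf, _⟩, hfv⟩
          · exact absurd (hfv ▸ head_mem_otNodes hf) hvT
          · exact ⟨hf, hfv⟩
        · rintro ⟨hf, hfv⟩
          exact ⟨Or.inr ⟨hf, hfv ▸ hvT⟩, hfv⟩
      rw [this]
      exact hBT.in_unique v (hBuniv ▸ Finset.mem_univ v) hvr
  have hreach : ∀ v, Relation.ReflTransGen (fun a b => (a, b) ∈ A) r v := by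
    have key : ∀ v, Relation.ReflTransGen (fun a b => (a, b) ∈ B) r v →
        Relation.ReflTransGen (fun a b => (a, b) ∈ A) r v := by
      intro v hv
      induction hv with
      | refl => exact Relation.ReflTransGen.refl
      | @tail b c _ hbc ih =>
        by_cases hcT : c ∈ otNodes T r
        · exact Relation.ReflTransGen.mono (fun a b hab => hTsub hab) _ _ (hTT.reach c hcT)
        · exact ih.tail ((hmem (b, c)).mpr (Or.inr ⟨hbc, hcT⟩))
    exact fun v => key v (hBT.reach v (hBuniv ▸ Finset.mem_univ v))
  have huniv : otNodes A r = Finset.univ := by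
    apply Finset.eq_univ_of_forall
    intro v
    by_cases hvT : v ∈ otNodes T r
    · exact otNodes_mono hTsub hvT
    · have hvr : v ≠ r := fun hvr => hvT (hvr ▸ root_mem_otNodes)
      obtain ⟨e, he, he2, _⟩ := in_edge hBT (hBuniv ▸ Finset.mem_univ v) hvr
      have : e ∈ A := (hmem e).mpr (Or.inr ⟨he, he2 ▸ hvT⟩)
      exact he2 ▸ head_mem_otNodes this
  exact ⟨⟨hne, hroot, hinu, fun v _ => hreach v⟩, huniv⟩

lemma extend_internal (hTT : IsOutTree T r) :
    internalCount T r ≤ internalCount (T ∪ B.filter fun e => e.2 ∉ otNodes T r) r := by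
  apply Finset.card_le_card
  intro w hw
  obtain ⟨hwN, f, hf⟩ := Finset.mem_filter.mp hw
  obtain ⟨hfT, hf1⟩ := Finset.mem_filter.mp hf
  exact Finset.mem_filter.mpr ⟨otNodes_mono Finset.subset_union_left hwN,
    f, Finset.mem_filter.mpr ⟨Finset.mem_union_left _ hfT, hf1⟩⟩

end Extend


theorem stmt9 [DecidableEq V] [Fintype V] (G : V → V → Prop) (k : ℕ) (hk : 1 ≤ k) :
    (∃ r : V, ∃ B : Finset (V × V), IsOutBranchingOf G B r ∧ k ≤ internalCount B r) ↔
    (∃ r : V, (∃ B : Finset (V × V), IsOutBranchingOf G B r) ∧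
      ∃ T : Finset (V × V), IsOutTreeOf G T r ∧
        internalCount T r = k ∧ leafCount T r ≤ k) := by
  constructor
  · rintro ⟨r, B, ⟨⟨hBG, hBT⟩, hBuniv⟩, hkB⟩
    obtain ⟨T, hTG, hTT, hTk, hTleaf⟩ := prune G k hk B.card B r rfl hBT hBG hkB
    exact ⟨r, ⟨B, ⟨hBG, hBT⟩, hBuniv⟩, T, ⟨hTG, hTT⟩, hTk, hTleaf⟩
  · rintro ⟨r, ⟨B, ⟨hBG, hBT⟩, hBuniv⟩, T, ⟨hTG, hTT⟩, hTk, _⟩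
    classical
    refine ⟨r, T ∪ B.filter fun e => e.2 ∉ otNodes T r, ⟨⟨?_, (extend_tree hBT hBuniv hTT).1⟩,
      (extend_tree hBT hBuniv hTT).2⟩, hTk ▸ extend_internal hTT⟩
    intro f hf
    rcases Finset.mem_union.mp hf with hf | hf
    · exact hTG f hf
    · exact hBG f (Finset.mem_filter.mp hf).1
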